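/- arXiv:1210.1200 — 7 statements merged into one kernel-verified Lean document; each statement's English description precedes it below -/
import Mathlib

section
/- For every infinite binary stream s, the set Blues s of blue positions of s is almost full if and only if the set Reds s of red positions of s is streamless, i.e., every duplicate-free colist over Reds s is finite. -/
/-- The suffix of a stream at position `n`. -/
def suff (s : ℕ → Bool) (n : ℕ) : ℕ → Bool := fun k => s (n + k)

/-- The weak-until predicate transformer (greatest fixed point, impredicative). -/
def W (X : (ℕ → Bool) → Prop) (s : ℕ → Bool) : Prop :=
  ∃ Y : (ℕ → Bool) → Prop, Y s ∧
    ∀ t, Y t → (t 0 = true → X (suff t 1)) ∧ (t 0 = false → Y (suff t 1))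

/-- A stream is almost always blue: least fixed point of `W`. -/
def pre (s : ℕ → Bool) : Prop :=
  ∀ P : (ℕ → Bool) → Prop, (∀ t, W P t → P t) → P s

/-- The strong-until predicate transformer (inductive). -/
inductive U (X : (ℕ → Bool) → Prop) : (ℕ → Bool) → Prop
  | red : ∀ t, t 0 = true → X (suff t 1) → U X t
  | blue : ∀ t, t 0 = false → U X (suff t 1) → U X t

/-- A stream is infinitely often red: greatest fixed point of `U`. -/
def rep (s : ℕ → Bool) : Prop :=
  ∃ P : (ℕ → Bool) → Prop, P s ∧ ∀ t, P t → U P t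

/-- `succs s n m` : `m` is the position following the first red position at or after `n`. -/
def succs (s : ℕ → Bool) (n m : ℕ) : Prop :=
  ∃ l, n ≤ l ∧ (∀ k, n ≤ k → k < l → s k = false) ∧ s l = true ∧ m = l + 1

/-- The set of red positions of a stream. -/
def Reds (s : ℕ → Bool) : Set ℕ := {n | s n = true}

/-- The set of blue positions of a stream. -/
def Blues (s : ℕ → Bool) : Set ℕ := {n | s n = false}

/-- A colist is duplicate-free over `A`: entries lie in `A` and entries at
distinct positions are distinct. -/
def DupFree (l : Stream'.Seq ℕ) (A : Set ℕ) : Prop :=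
  (∀ n x, l.get? n = some x → x ∈ A) ∧
  (∀ m n x y, m ≠ n → l.get? m = some x → l.get? n = some y → x ≠ y)

/-- A set of naturals is streamless if every duplicate-free colist over it is finite. -/
def Streamless (A : Set ℕ) : Prop :=
  ∀ l : Stream'.Seq ℕ, DupFree l A → l.Terminates

/-- A set of naturals is almost full if every strictly increasing sequence hits it. -/
def AlmostFull (A : Set ℕ) : Prop :=
  ∀ i : ℕ → ℕ, StrictMono i → ∃ n, i n ∈ A

/-- A colist is a descending chain of the relation `r` starting at `x`. -/
def IsDescChain (r : ℕ → ℕ → Prop) (x : ℕ) (l : Stream'.Seq ℕ) : Prop :=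
  (∀ y, l.get? 0 = some y → r x y) ∧
  (∀ n a b, l.get? n = some a → l.get? (n + 1) = some b → r a b)

/-- `r` is strongly normalizing at `x`: every descending chain starting at `x` is finite. -/
def SN (r : ℕ → ℕ → Prop) (x : ℕ) : Prop :=
  ∀ l : Stream'.Seq ℕ, IsDescChain r x l → l.Terminates

/-- `n` is antifounded wrt `r`: greatest fixed point of the one-step descent operator. -/
def af (r : ℕ → ℕ → Prop) (n : ℕ) : Prop :=
  ∃ Q : ℕ → Prop, Q n ∧ ∀ k, Q k → ∃ m, r k m ∧ Q m

/-- `atmost n s`: fewer than `n` red positions up to every position `m`. -/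
def atmost (n : ℕ) (s : ℕ → Bool) : Prop :=
  ∀ m, ((Finset.range (m + 1)).filter (fun k => s k = true)).card < n

/-- Iterates of the weak-until operator starting from the empty predicate. -/
def Fiter : ℕ → (ℕ → Bool) → Prop
  | 0 => fun _ => False
  | n + 1 => W (Fiter n)

/-- The ω-iterate of the weak-until operator. -/
def Fomega (s : ℕ → Bool) : Prop := ∃ n, Fiter n s

/-- The Lesser Principle of Omniscience. -/
def LPO : Prop := ∀ s : ℕ → Bool, (∃ n, s n = true) ∨ (∀ n, s n = false)

/-- Markov's Principle. -/
def MP : Prop := ∀ s : ℕ → Bool, ¬(∀ n, s n = false) → ∃ n, s n = true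

/-- Noetherian sets of naturals. -/
inductive Noeth : Set ℕ → Prop
  | intro : ∀ A : Set ℕ, (∀ x ∈ A, Noeth (A \ {x})) → Noeth A

lemma aux_get_ofStream (f : ℕ → ℕ) (n : ℕ) :
    (Stream'.Seq.ofStream f).get? n = some (f n) := rfl

lemma aux_finite_iff_af (s : ℕ → Bool) : AlmostFull (Blues s) ↔ (Reds s).Finite := by
  constructor
  · intro h
    by_contra hinf
    rw [← Set.not_infinite, not_not] at hinf
    obtain ⟨n, hn⟩ := h (Nat.nth (· ∈ Reds s)) (Nat.nth_strictMono hinf)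
    have := Nat.nth_mem_of_infinite hinf n
    simp [Reds, Blues] at this hn
    rw [hn] at this; exact Bool.noConfusion this
  · intro hfin i hi
    obtain ⟨N, hN⟩ := hfin.bddAbove
    refine ⟨N + 1, ?_⟩
    have hiN : N + 1 ≤ i (N + 1) := hi.le_apply
    by_contra h
    have : i (N + 1) ∈ Reds s := by
      simp only [Reds, Blues, Set.mem_setOf_eq] at h ⊢
      exact eq_true_of_ne_false h
    exact absurd (hN this) (by omega)

lemma aux_finite_iff_sl (s : ℕ → Bool) : Streamless (Reds s) ↔ (Reds s).Finite := by
  constructor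
  · intro h
    by_contra hinf
    rw [← Set.not_infinite, not_not] at hinf
    have hterm := h (Stream'.Seq.ofStream (fun n => Nat.nth (· ∈ Reds s) n)) ?_
    · obtain ⟨n, hn⟩ := hterm
      rw [Stream'.Seq.TerminatedAt, aux_get_ofStream] at hn
      exact Option.some_ne_none _ hn
    · constructor
      · intro n x hx
        rw [aux_get_ofStream] at hx
        obtain rfl : Nat.nth (· ∈ Reds s) n = x := Option.some.inj hx
        exact Nat.nth_mem_of_infinite hinf n
      · intro m n x y hmn hm hn
        rw [aux_get_ofStream] at hm hn
        obtain rfl := Option.some.inj hm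
        obtain rfl := Option.some.inj hn
        exact fun he => hmn (Nat.nth_injective hinf he)
  · intro hfin l hl
    by_contra hterm
    have hall : ∀ n, ∃ x, l.get? n = some x := by
      intro n
      cases hx : l.get? n with
      | none => exact absurd ⟨n, hx⟩ hterm
      | some x => exact ⟨x, rfl⟩
    choose f hf using hall
    have : (Reds s).Infinite :=
      Set.infinite_of_injective_forall_mem
        (f := f)
        (fun m n h => by
          by_contra hmn
          exact hl.2 m n (f m) (f n) hmn (hf m) (hf n) h)
        (fun n => hl.1 n (f n) (hf n))
    exact this hfin

theorem stmt_0 : ∀ s : ℕ → Bool, AlmostFull (Blues s) ↔ Streamless (Reds s) := by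
  intro s
  rw [aux_finite_iff_af, aux_finite_iff_sl]
end

section
/- For every predicate X on streams, every stream s, and every natural number n: W X (s|n) holds if and only if for all m with n ≻ₛ m, X (s|m) holds. -/
lemma suff_suff (s : ℕ → Bool) (n : ℕ) : suff (suff s n) 1 = suff s (n+1) := by
  funext k; simp [suff]; ring_nf

theorem stmt_1 : ∀ (X : (ℕ → Bool) → Prop) (s : ℕ → Bool) (n : ℕ),
    W X (suff s n) ↔ ∀ m, succs s n m → X (suff s m) := by
  intro X s n
  constructor
  · rintro ⟨Y, hY, hstep⟩ m ⟨l, hnl, hblue, hred, rfl⟩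
    have aux : ∀ d, n + d ≤ l → Y (suff s (n + d)) := by
      intro d
      induction d with
      | zero => intro _; simpa using hY
      | succ d ih =>
        intro h
        have hY' := ih (by omega)
        have hb : suff s (n + d) 0 = false := by
          simpa [suff] using hblue (n + d) (by omega) (by omega)
        have h2 := (hstep _ hY').2 hb
        rw [suff_suff] at h2
        have he : n + (d + 1) = n + d + 1 := by omega
        rw [he]; exact h2
    have hYl : Y (suff s l) := by
      have h3 := aux (l - n) (by omega)
      have he : n + (l - n) = l := by omega
      rwa [he] at h3
    have hr : suff s l 0 = true := by simpa [suff] using hred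
    have := (hstep _ hYl).1 hr
    rwa [suff_suff] at this
  · intro h
    refine ⟨fun t => ∃ k, t = suff s k ∧ ∀ m, succs s k m → X (suff s m),
      ⟨n, rfl, h⟩, ?_⟩
    rintro t ⟨k, rfl, hk⟩
    constructor
    · intro ht
      rw [suff_suff]
      exact hk (k + 1) ⟨k, le_refl _, fun j h1 h2 => by omega, by simpa [suff] using ht, rfl⟩
    · intro ht
      rw [suff_suff]
      refine ⟨k + 1, rfl, ?_⟩
      rintro m ⟨l, hkl, hb, hr, rfl⟩
      exact hk _ ⟨l, by omega, fun j h1 h2 => by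
        rcases eq_or_lt_of_le h1 with rfl | h
        · simpa [suff] using ht
        · exact hb j (by omega) h2, hr, rfl⟩
end

section
/- For every stream s and every natural number n: the suffix s|n is almost always blue (pre (s|n)) if and only if n is accessible with respect to the relation ≻ₛ. In particular (n = 0), pre s holds iff 0 is accessible with respect to ≻ₛ. -/
theorem stmt_2 : ∀ (s : ℕ → Bool) (n : ℕ),
    pre (suff s n) ↔ Acc (fun a b => succs s b a) n := by
  intro s n
  constructor
  · intro hpre
    have key := hpre (fun t => ∀ m, (∀ k, t k = s (m + k)) → Acc (fun a b => succs s b a) m) ?_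
    · exact key n (fun k => rfl)
    intro t hW m ht
    obtain ⟨Y, hYt, hstep⟩ := hW
    constructor
    intro m' hs
    obtain ⟨l, hml, hblue, hred, rfl⟩ := hs
    have chain : ∀ d, (∀ k, k < d → t k = false) → Y (suff t d) := by
      intro d
      induction d with
      | zero =>
        intro _
        have : suff t 0 = t := by funext k; simp [suff]
        rw [this]; exact hYt
      | succ d ih =>
        intro hb
        have hYd := ih (fun k hk => hb k (by omega))
        have h1 := (hstep (suff t d) hYd).2
        have hd0 : suff t d 0 = false := by
          show t (d + 0) = false
          exact hb d (by omega)
        have := h1 hd0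
        have heq : suff (suff t d) 1 = suff t (d + 1) := by
          funext k; show t (d + (1 + k)) = t (d + 1 + k); congr 1; omega
        rwa [heq] at this
    have hY : Y (suff t (l - m)) := by
      apply chain
      intro k hk
      rw [ht k]
      exact hblue (m + k) (by omega) (by omega)
    have hred' : suff t (l - m) 0 = true := by
      show t (l - m + 0) = true
      rw [ht]
      have : m + (l - m + 0) = l := by omega
      rw [this]; exact hred
    have hP := (hstep (suff t (l - m)) hY).1 hred'
    exact hP (l + 1) (fun k => by
      show t (l - m + (1 + k)) = s (l + 1 + k)
      rw [ht]; congr 1; omega)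
  · intro hacc
    induction hacc with
    | intro n h ih =>
      intro P hP
      apply hP
      refine ⟨fun t => ∃ m, n ≤ m ∧ (∀ k, n ≤ k → k < m → s k = false) ∧ ∀ k, t k = s (m + k),
        ⟨n, le_refl n, fun k h1 h2 => absurd h1 (by omega), fun k => rfl⟩, ?_⟩
      intro t ⟨m, hnm, hbl, ht⟩
      constructor
      · intro hred
        have hsm : s m = true := by have := ht 0; rw [hred] at this; exact this.symm
        have hsuccs : succs s n (m + 1) := ⟨m, hnm, hbl, hsm, rfl⟩
        have hpre := ih (m + 1) hsuccs P hP
        have heq : suff t 1 = suff s (m + 1) := by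
          funext k; show t (1 + k) = s (m + 1 + k); rw [ht]; congr 1; omega
        rwa [heq]
      · intro hblue
        refine ⟨m + 1, by omega, ?_, ?_⟩
        · intro k h1 h2
          rcases Nat.lt_or_ge k m with h | h
          · exact hbl k h1 h
          · have : k = m := by omega
            subst this
            have := ht 0; rw [hblue] at this; exact this.symm
        · intro k
          show t (1 + k) = s (m + 1 + k)
          rw [ht]; congr 1; omega
end

section
/- For every stream s: the relation ≻ₛ is strongly normalizing at 0 (every descending ≻ₛ-chain starting at 0 is finite) if and only if the set Reds s of red positions of s is streamless. -/
open Classical in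
private noncomputable def chainStep (s : ℕ → Bool) (hinf : (Reds s).Infinite) (n : ℕ) : ℕ :=
  Nat.find (p := fun l => n ≤ l ∧ s l = true)
    (by obtain ⟨b, hb, hb2⟩ := hinf.exists_gt n; exact ⟨b, le_of_lt hb2, hb⟩) + 1

private lemma chainStep_succs (s : ℕ → Bool) (hinf : (Reds s).Infinite) (n : ℕ) :
    succs s n (chainStep s hinf n) := by
  classical
  set p := fun l => n ≤ l ∧ s l = true with hp
  have hex : ∃ l, p l := by obtain ⟨b, hb, hb2⟩ := hinf.exists_gt n; exact ⟨b, le_of_lt hb2, hb⟩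
  refine ⟨Nat.find hex, (Nat.find_spec hex).1, ?_, (Nat.find_spec hex).2, rfl⟩
  intro k hk hkl
  have := Nat.find_min hex hkl
  simp only [hp, not_and] at this
  have := this hk
  exact Bool.not_eq_true _ |>.mp (by simpa using this)

private lemma succs_lower {s : ℕ → Bool} {n m : ℕ} (h : succs s n m) :
    n < m ∧ m - 1 ∈ Reds s ∧ 1 ≤ m := by
  obtain ⟨l, hl, _, hred, rfl⟩ := h
  exact ⟨Nat.lt_succ_of_le hl, by simpa [Reds] using hred, Nat.succ_le_succ (Nat.zero_le _)⟩

private lemma reds_infinite_of_chain (s : ℕ → Bool) (l : Stream'.Seq ℕ)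
    (hc : IsDescChain (succs s) 0 l) (hnt : ¬ l.Terminates) : (Reds s).Infinite := by
  have hs : ∀ n, (l.get? n).isSome := Stream'.Seq.not_terminates_iff.mp hnt
  set a : ℕ → ℕ := fun n => (l.get? n).get (hs n) with ha
  have hget : ∀ n, l.get? n = some (a n) := fun n => (Option.some_get (hs n)).symm
  have hstep : ∀ n, succs s (a n) (a (n + 1)) := fun n => hc.2 n _ _ (hget n) (hget (n + 1))
  have hmono : StrictMono a := strictMono_nat_of_lt_succ fun n => (succs_lower (hstep n)).1
  have hmem : ∀ n, a (n + 1) - 1 ∈ Reds s := fun n => (succs_lower (hstep n)).2.1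
  have hmono2 : StrictMono (fun n => a (n + 1) - 1) := by
    intro i j hij
    have h1 : a (i + 1) < a (j + 1) := hmono (Nat.succ_lt_succ hij)
    have h2 := (succs_lower (hstep i)).2.2
    simp only
    omega
  exact Set.infinite_of_injective_forall_mem hmono2.injective hmem

private lemma not_SN_of_infinite (s : ℕ → Bool) (hinf : (Reds s).Infinite) :
    ¬ SN (succs s) 0 := by
  intro hSN
  set g : ℕ → ℕ := fun n => (chainStep s hinf)^[n + 1] 0 with hg
  have hget : ∀ n, (Stream'.Seq.ofStream g).get? n = some (g n) := fun _ => rfl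
  have hchain : IsDescChain (succs s) 0 (Stream'.Seq.ofStream g) := by
    constructor
    · intro y hy
      rw [hget 0] at hy
      obtain rfl : g 0 = y := Option.some.inj hy
      exact chainStep_succs s hinf 0
    · intro n x y hx hy
      rw [hget n] at hx; rw [hget (n + 1)] at hy
      obtain rfl : g n = x := Option.some.inj hx
      obtain rfl : g (n + 1) = y := Option.some.inj hy
      have : g (n + 1) = chainStep s hinf (g n) := by
        simp only [hg, Function.iterate_succ_apply']
      rw [this]
      exact chainStep_succs s hinf (g n)
  obtain ⟨n, hn⟩ := hSN _ hchain
  simp [Stream'.Seq.TerminatedAt, hget n] at hn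

private lemma not_streamless_of_infinite (s : ℕ → Bool) (hinf : (Reds s).Infinite) :
    ¬ Streamless (Reds s) := by
  intro hSL
  set e := hinf.natEmbedding with he
  set g : ℕ → ℕ := fun n => (e n : ℕ) with hg
  have hget : ∀ n, (Stream'.Seq.ofStream g).get? n = some (g n) := fun _ => rfl
  have hdf : DupFree (Stream'.Seq.ofStream g) (Reds s) := by
    constructor
    · intro n x hx
      rw [hget n] at hx
      obtain rfl : g n = x := Option.some.inj hx
      exact (e n).2
    · intro m n x y hmn hx hy
      rw [hget m] at hx; rw [hget n] at hy
      obtain rfl : g m = x := Option.some.inj hx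
      obtain rfl : g n = y := Option.some.inj hy
      intro hxy
      exact hmn (e.injective (Subtype.ext hxy))
  obtain ⟨n, hn⟩ := hSL _ hdf
  simp [Stream'.Seq.TerminatedAt, hget n] at hn

private lemma streamless_of_finite (s : ℕ → Bool) (hfin : (Reds s).Finite) :
    Streamless (Reds s) := by
  intro l hdf
  by_contra hnt
  have hs : ∀ n, (l.get? n).isSome := Stream'.Seq.not_terminates_iff.mp hnt
  set a : ℕ → ℕ := fun n => (l.get? n).get (hs n) with ha
  have hget : ∀ n, l.get? n = some (a n) := fun n => (Option.some_get (hs n)).symm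
  have : (Reds s).Infinite := by
    refine Set.infinite_of_injective_forall_mem (f := a) ?_ (fun n => hdf.1 n _ (hget n))
    intro i j hij
    by_contra hne
    exact hdf.2 i j (a i) (a j) hne (hget i) (hget j) hij
  exact this hfin

private lemma SN_of_finite (s : ℕ → Bool) (hfin : (Reds s).Finite) : SN (succs s) 0 := by
  intro l hc
  by_contra hnt
  exact (reds_infinite_of_chain s l hc hnt) hfin

theorem stmt_3 : ∀ s : ℕ → Bool, SN (succs s) 0 ↔ Streamless (Reds s) := by
  intro s
  by_cases hfin : (Reds s).Finite
  · exact ⟨fun _ => streamless_of_finite s hfin, fun _ => SN_of_finite s hfin⟩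
  · have hinf : (Reds s).Infinite := hfin
    exact ⟨fun h => absurd h (not_SN_of_infinite s hinf),
           fun h => absurd h (not_streamless_of_infinite s hinf)⟩
end

section
/- For every natural number n and every stream s: Fⁿ s holds if and only if atmost n s, i.e., the n-th iterate of the weak-until operator starting from the empty predicate coincides with the predicate "fewer than n red positions". -/
lemma count_suff (t : ℕ → Bool) (m : ℕ) :
    ((Finset.range (m+2)).filter (fun k => t k = true)).card =
    ((Finset.range (m+1)).filter (fun k => t (1+k) = true)).card
      + (if t 0 = true then 1 else 0) := by
  rw [Finset.card_filter, Finset.card_filter, Finset.sum_range_succ']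
  simp [Nat.add_comm]

theorem stmt_7 : ∀ (n : ℕ) (s : ℕ → Bool), Fiter n s ↔ atmost n s := by
  intro n
  induction n with
  | zero =>
    intro s
    constructor
    · intro h; exact absurd h (by simp [Fiter])
    · intro h; exact absurd (h 0) (Nat.not_lt_zero _)
  | succ n ih =>
    intro s
    constructor
    · rintro ⟨Y, hYs, hstep⟩
      intro m
      induction m generalizing s with
      | zero =>
        cases h0 : s 0 with
        | false => simp [Finset.range_one, Finset.filter_singleton, h0]
        | true =>
          have hF := (hstep s hYs).1 h0
          have hn := (ih (suff s 1)).1 hF 0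
          simp [Finset.range_one, Finset.filter_singleton, h0]
          omega
      | succ m ihm =>
        have hc : ((Finset.range (m+1+1)).filter (fun k => s k = true)).card =
            ((Finset.range (m+1)).filter (fun k => s (1+k) = true)).card
              + (if s 0 = true then 1 else 0) := count_suff s m
        cases h0 : s 0 with
        | false =>
          have hY := (hstep s hYs).2 h0
          have := ihm (suff s 1) hY
          simp only [suff] at this
          rw [h0] at hc
          simp at hc
          unfold suff at this
          omega
        | true =>
          have hF := (hstep s hYs).1 h0
          have := (ih (suff s 1)).1 hF m
          simp only [atmost, suff] at this
          rw [h0] at hc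
          simp at hc
          unfold suff at this
          omega
    · intro h
      refine ⟨atmost (n+1), h, ?_⟩
      intro t ht
      constructor
      · intro h0
        apply (ih _).2
        intro m
        have h1 := ht (m+1)
        have hc : ((Finset.range (m+1+1)).filter (fun k => t k = true)).card =
            ((Finset.range (m+1)).filter (fun k => t (1+k) = true)).card
              + (if t 0 = true then 1 else 0) := count_suff t m
        rw [h0] at hc
        simp at hc
        simp only [atmost, suff]
        unfold suff
        omega
      · intro h0 m
        have h1 := ht (m+1)
        have hc : ((Finset.range (m+1+1)).filter (fun k => t k = true)).card =
            ((Finset.range (m+1)).filter (fun k => t (1+k) = true)).card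
              + (if t 0 = true then 1 else 0) := count_suff t m
        rw [h0] at hc
        simp at hc
        simp only [atmost, suff]
        unfold suff
        omega
end

section
/- For every stream s: if s is almost always blue (pre s), then the set Reds s of red positions of s is streamless. -/
lemma finite_streamless {A : Set ℕ} (hA : A.Finite) : Streamless A := by
  intro l hl
  by_contra hterm
  have hsome : ∀ n, ∃ x, l.get? n = some x := by
    intro n
    rcases h : l.get? n with _ | x
    · exact absurd ⟨n, h⟩ hterm
    · exact ⟨x, rfl⟩
  choose f hf using hsome
  have hinj : Function.Injective f := by
    intro m n hmn
    by_contra hne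
    exact (hl.2 m n (f m) (f n) hne (hf m) (hf n)) hmn
  have hmem : ∀ n, f n ∈ A := fun n => hl.1 n (f n) (hf n)
  exact (Set.infinite_of_injective_forall_mem hinj hmem) hA

lemma pre_finite {s : ℕ → Bool} (h : pre s) : (Reds s).Finite := by
  apply h (fun t => (Reds t).Finite)
  intro t hW
  obtain ⟨Y, hYt, hstep⟩ := hW
  by_cases hall : ∀ n, t n = false
  · have : Reds t = ∅ := by
      ext k; simp [Reds, hall k]
    rw [this]; exact Set.finite_empty
  · push_neg at hall
    have hex : ∃ n, t n = true := by
      obtain ⟨n, hn⟩ := hall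
      exact ⟨n, by simpa using hn⟩
    classical
    let l := Nat.find hex
    have hl : t l = true := Nat.find_spec hex
    have hlt : ∀ k, k < l → t k = false := by
      intro k hk
      have := Nat.find_min hex hk
      simpa using this
    have hsuff0 : suff t 0 = t := by
      funext j; simp [suff]
    have hsuffsuff : ∀ k, suff (suff t k) 1 = suff t (k + 1) := by
      intro k; funext j; simp [suff]; ring_nf
    have hY : ∀ k, k ≤ l → Y (suff t k) := by
      intro k
      induction k with
      | zero => intro _; rwa [hsuff0]
      | succ n ih =>
        intro hn
        have hn' : n ≤ l := Nat.le_of_succ_le hn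
        have hYn := ih hn'
        have hblue : (suff t n) 0 = false := by
          have := hlt n (Nat.lt_of_succ_le hn)
          simpa [suff] using this
        have := (hstep _ hYn).2 hblue
        rwa [hsuffsuff] at this
    have hYl := hY l le_rfl
    have hred : (suff t l) 0 = true := by simpa [suff] using hl
    have hP : (Reds (suff t (l + 1))).Finite := by
      have := (hstep _ hYl).1 hred
      rwa [hsuffsuff] at this
    have hsub : Reds t ⊆ insert l ((fun m => l + 1 + m) '' Reds (suff t (l + 1))) := by
      intro k hk
      rcases lt_trichotomy k l with hkl | hkl | hkl
      · exact absurd hk (by simp [Reds, hlt k hkl])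
      · left; exact hkl
      · right
        refine ⟨k - (l + 1), ?_, show l + 1 + (k - (l + 1)) = k by omega⟩
        have : suff t (l + 1) (k - (l + 1)) = t k := by
          simp only [suff]; congr 1; omega
        simpa [Reds, this] using hk
    exact ((hP.image _).insert l).subset hsub

theorem stmt_11 : ∀ s : ℕ → Bool, pre s → Streamless (Reds s) := by
  intro s hs
  exact finite_streamless (pre_finite hs)
end

section
/- For every stream s: if s is almost always blue (pre s), then it is not the case that s is not eventually all blue, i.e., ¬¬(∃ n, ∀ m ≥ n, s m = false). -/
theorem stmt_12 : ∀ s : ℕ → Bool,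
    pre s → ¬¬(∃ n, ∀ m, n ≤ m → s m = false) := by
  intro s hpre hneg
  apply hneg
  apply hpre (fun t => ∃ n, ∀ m, n ≤ m → t m = false)
  rintro t ⟨Y, hYt, hstep⟩
  by_cases hex : ∃ k, t k = true
  · set k := Nat.find hex with hkdef
    have hk : t k = true := Nat.find_spec hex
    have hlt : ∀ j, j < k → t j = false := by
      intro j hj
      have := Nat.find_min hex hj
      simpa using this
    have hY : ∀ j, j ≤ k → Y (suff t j) := by
      intro j hj
      induction j with
      | zero =>
        have : suff t 0 = t := by funext m; simp [suff]
        rw [this]; exact hYt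
      | succ j ih =>
        have hjk : j ≤ k := Nat.le_of_succ_le hj
        have hYj := ih hjk
        have hhead : (suff t j) 0 = false := by
          have : t j = false := hlt j (Nat.lt_of_succ_le hj)
          simpa [suff] using this
        have := (hstep (suff t j) hYj).2 hhead
        have heq : suff (suff t j) 1 = suff t (j + 1) := by
          funext m; simp [suff]; ring_nf
        rwa [heq] at this
    have hYk := hY k le_rfl
    have hhead : (suff t k) 0 = true := by simpa [suff] using hk
    have hP := (hstep (suff t k) hYk).1 hhead
    have heq : suff (suff t k) 1 = suff t (k + 1) := by
      funext m; simp [suff]; ring_nf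
    rw [heq] at hP
    obtain ⟨n, hn⟩ := hP
    refine ⟨k + 1 + n, fun m hm => ?_⟩
    have h1 : t (k + 1 + (m - (k + 1))) = false := hn (m - (k + 1)) (by omega)
    have h2 : k + 1 + (m - (k + 1)) = m := by omega
    rwa [h2] at h1
  · push_neg at hex
    exact ⟨0, fun m _ => by simpa using hex m⟩
end
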